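/- Let V ∈ ℝ^{NL×NL} be indexed by pairs (i,k) with i ∈ [N], k ∈ ℤ_L, and suppose V is block circulant in the shift index: V_{(i,k);(j,l)} depends only on i, j, and (l−k) mod L. Let P = (DFT_L ⊗ I_N) P_0^T be the block-DFT conjugation (P_0 a suitable permutation). Write P V P* = diag(V_0,...,V_{L-1}) with V_k ∈ ℂ^{N×N}. Then the constraints (V real, V ⪰ 0, V_{(i,k);(i,l)} = 0 for k ≠ l with V_{(i,k);(i,k)} = 1/L, and Σ_{k,l} V_{(i,k);(j,l)} = 1) are respectively equivalent to: V_k = conj(V_{L−k}) for all k; V_k ⪰ 0 for all k; (V_k)_{ii} = 1/L for all k,i; and (V_0)_{ij} = 1/L for all i,j. -/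

import Mathlib

open Finset
open scoped ComplexOrder
open Matrix

noncomputable def zet (L : ℕ) : ℂ := Complex.exp (2 * (Real.pi : ℂ) * Complex.I / L)

lemma zet_pow_L (L : ℕ) [NeZero L] : zet L ^ L = 1 := by
  rw [zet, ← Complex.exp_nat_mul]
  rw [mul_div_assoc']
  rw [mul_comm (L:ℂ), mul_div_assoc, div_self (by exact_mod_cast (NeZero.ne L) : (L:ℂ) ≠ 0),
    mul_one]
  exact Complex.exp_two_pi_mul_I

lemma zet_pow_mod (L : ℕ) [NeZero L] (n : ℕ) : zet L ^ n = zet L ^ (n % L) := by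
  conv_lhs => rw [← Nat.div_add_mod n L]
  rw [pow_add, pow_mul, zet_pow_L, one_pow, one_mul]

lemma zet_pow_modEq (L : ℕ) [NeZero L] {m n : ℕ} (h : m ≡ n [MOD L]) :
    zet L ^ m = zet L ^ n := by
  rw [zet_pow_mod L m, zet_pow_mod L n, h]

noncomputable def Fc (L : ℕ) (a b : ZMod L) : ℂ := zet L ^ (a.val * b.val)

lemma Fc_comm (L : ℕ) (a b : ZMod L) : Fc L a b = Fc L b a := by
  rw [Fc, Fc, mul_comm]

lemma Fc_zero (L : ℕ) (b : ZMod L) : Fc L 0 b = 1 := by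
  simp [Fc, ZMod.val_zero]

lemma Fc_zero_right (L : ℕ) (a : ZMod L) : Fc L a 0 = 1 := by
  rw [Fc_comm, Fc_zero]

lemma Fc_add_left (L : ℕ) [NeZero L] (a a' b : ZMod L) :
    Fc L (a + a') b = Fc L a b * Fc L a' b := by
  rw [Fc, Fc, Fc, ← pow_add]
  apply zet_pow_modEq
  calc (a + a').val * b.val ≡ (a.val + a'.val) * b.val [MOD L] := by
        exact Nat.ModEq.mul_right _ (by rw [ZMod.val_add]; exact (Nat.mod_modEq _ _))
    _ = a.val * b.val + a'.val * b.val := by ring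

lemma Fc_add_right (L : ℕ) [NeZero L] (a b b' : ZMod L) :
    Fc L a (b + b') = Fc L a b * Fc L a b' := by
  rw [Fc_comm, Fc_add_left, Fc_comm L b, Fc_comm L b']

lemma Fc_neg_mul (L : ℕ) [NeZero L] (a b : ZMod L) : Fc L a b * Fc L (-a) b = 1 := by
  rw [← Fc_add_left, add_neg_cancel, Fc_zero]

lemma Fc_ne_zero (L : ℕ) (a b : ZMod L) : Fc L a b ≠ 0 :=
  pow_ne_zero _ (Complex.exp_ne_zero _)

lemma Fc_inv (L : ℕ) [NeZero L] (a b : ZMod L) : Fc L (-a) b = (Fc L a b)⁻¹ :=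
  eq_inv_of_mul_eq_one_left (by rw [mul_comm]; exact Fc_neg_mul L a b)

lemma Fc_neg_neg (L : ℕ) [NeZero L] (a b : ZMod L) : Fc L (-a) (-b) = Fc L a b := by
  rw [Fc_inv, Fc_comm, Fc_inv, Fc_comm, inv_inv]

lemma conj_Fc (L : ℕ) [NeZero L] (a b : ZMod L) :
    (starRingEnd ℂ) (Fc L a b) = Fc L (-a) b := by
  have h2 : Fc L a b * (starRingEnd ℂ) (Fc L a b) = 1 := by
    rw [Complex.mul_conj]
    norm_cast
    rw [Fc, zet, ← Complex.exp_nat_mul]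
    rw [Complex.normSq_eq_norm_sq, Complex.norm_exp]
    have : ((a.val * b.val : ℕ) : ℂ) * (2 * (Real.pi:ℂ) * Complex.I / L)
        = ((2 * Real.pi * (a.val * b.val : ℕ) / L : ℝ) : ℂ) * Complex.I := by
      push_cast; ring
    rw [this, Complex.mul_I_re]
    simp
  exact mul_left_cancel₀ (Fc_ne_zero L a b) (by rw [h2, Fc_neg_mul])

lemma sum_pow_val (L : ℕ) [NeZero L] (x : ℂ) :
    ∑ b : ZMod L, x ^ b.val = ∑ i ∈ Finset.range L, x ^ i := by
  refine Finset.sum_nbij' (fun b => b.val) (fun i => (i : ZMod L))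
    (fun b _ => Finset.mem_range.mpr (ZMod.val_lt b)) (fun i _ => Finset.mem_univ _)
    (fun b _ => ZMod.natCast_rightInverse b)
    (fun i hi => ZMod.val_natCast_of_lt (Finset.mem_range.mp hi)) (fun b _ => rfl)

lemma sum_Fc (L : ℕ) [NeZero L] (a : ZMod L) :
    ∑ b : ZMod L, Fc L a b = if a = 0 then (L : ℂ) else 0 := by
  by_cases h : a = 0
  · simp [h, Fc_zero, Finset.card_univ]
  · simp only [h, if_false]
    have : ∀ b : ZMod L, Fc L a b = (zet L ^ a.val) ^ b.val := by
      intro b; rw [Fc, pow_mul]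
    simp only [this]
    rw [sum_pow_val]
    have hprim := Complex.isPrimitiveRoot_exp L (NeZero.ne L)
    have hne1 : zet L ^ a.val ≠ 1 := by
      apply hprim.pow_ne_one_of_pos_of_lt
      · exact ((ZMod.val_pos).mpr h).ne'
      · exact ZMod.val_lt a
    rw [geom_sum_eq hne1]
    rw [← pow_mul, mul_comm, pow_mul, zet_pow_L, one_pow, sub_self, zero_div]

lemma sum_Fc_left (L : ℕ) [NeZero L] (b : ZMod L) :
    ∑ a : ZMod L, Fc L a b = if b = 0 then (L : ℂ) else 0 := by
  simp_rw [Fc_comm L _ b]; exact sum_Fc L b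

lemma dft_inversion (L : ℕ) [NeZero L] (g : ZMod L → ℂ) (m : ZMod L) :
    ∑ k : ZMod L, Fc L (-k) m * (∑ m' : ZMod L, Fc L k m' * g m') = (L : ℂ) * g m := by
  have key : ∀ k m' : ZMod L, Fc L (-k) m * (Fc L k m' * g m')
      = Fc L k (m' - m) * g m' := by
    intro k m'
    have h0 : Fc L k m' = Fc L k (m' - m) * Fc L k m := by
      rw [← Fc_add_right, sub_add_cancel]
    have h1 : Fc L (-k) m * Fc L k m = 1 := by rw [mul_comm]; exact Fc_neg_mul L k m
    calc Fc L (-k) m * (Fc L k m' * g m')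
        = (Fc L (-k) m * Fc L k m) * (Fc L k (m' - m) * g m') := by rw [h0]; ring
      _ = Fc L k (m' - m) * g m' := by rw [h1, one_mul]
  simp_rw [Finset.mul_sum, key]
  rw [Finset.sum_comm]
  simp_rw [← Finset.sum_mul, sum_Fc_left, sub_eq_zero]
  simp [Finset.sum_ite_eq']

lemma dft_eq_zero (L : ℕ) [NeZero L] (g : ZMod L → ℂ)
    (h : ∀ k : ZMod L, ∑ m' : ZMod L, Fc L k m' * g m' = 0) (m : ZMod L) : g m = 0 := by
  have hinv := dft_inversion L g m
  simp_rw [h, mul_zero, Finset.sum_const_zero] at hinv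
  have hL : (L : ℂ) ≠ 0 := by exact_mod_cast NeZero.ne L
  exact (mul_eq_zero.mp hinv.symm).resolve_left hL

/-- for a block circulant `V`, the SDP constraints (realness, PSD,
diagonal-block structure with diagonal `1/L`, and row-block sums equal to `1`) are
respectively equivalent to the Fourier-side constraints `V_k = conj (V_{L-k})`,
`V_k ⪰ 0`, `(V_k)_{ii} = 1/L`, and `(V_0)_{ij} = 1/L`, where
`V_k = Σ_m e^{2πikm/L} V^{(m)}` with `V^{(m)}_{ij} = V_{(i,0);(j,m)}`. -/
theorem stmt6 (N L : ℕ) [NeZero L]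
    (V : Matrix (Fin N × ZMod L) (Fin N × ZMod L) ℂ)
    (hcirc : ∀ (i j : Fin N) (k l : ZMod L), V (i, k) (j, l) = V (i, 0) (j, l - k))
    (Vb : ZMod L → Matrix (Fin N) (Fin N) ℂ)
    (hVb : ∀ (k : ZMod L) (i j : Fin N),
      Vb k i j = ∑ m : ZMod L,
        Complex.exp (2 * (Real.pi : ℂ) * Complex.I * (k.val : ℂ) * (m.val : ℂ) / (L : ℂ))
          * V (i, 0) (j, m)) :
    ((∀ p q : Fin N × ZMod L, (V p q).im = 0) ↔
        ∀ (k : ZMod L) (i j : Fin N), Vb k i j = (starRingEnd ℂ) (Vb (-k) i j))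
      ∧ (V.PosSemidef ↔ ∀ k : ZMod L, (Vb k).PosSemidef)
      ∧ ((∀ (i : Fin N) (k l : ZMod L),
            (k ≠ l → V (i, k) (i, l) = 0) ∧ V (i, k) (i, k) = 1 / (L : ℂ)) ↔
          ∀ (k : ZMod L) (i : Fin N), Vb k i i = 1 / (L : ℂ))
      ∧ ((∀ i j : Fin N, ∑ k : ZMod L, ∑ l : ZMod L, V (i, k) (j, l) = 1) ↔
          ∀ i j : Fin N, Vb 0 i j = 1 / (L : ℂ)) := by
  have hL0 : (L : ℂ) ≠ 0 := by exact_mod_cast NeZero.ne L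
  -- rewrite hVb with Fc
  have hVb' : ∀ (k : ZMod L) (i j : Fin N),
      Vb k i j = ∑ m : ZMod L, Fc L k m * V (i, 0) (j, m) := by
    intro k i j
    rw [hVb]
    refine Finset.sum_congr rfl fun m _ => ?_
    congr 1
    rw [Fc, zet, ← Complex.exp_nat_mul]
    congr 1
    push_cast
    ring
  have hconjVb : ∀ (k : ZMod L) (i j : Fin N),
      (starRingEnd ℂ) (Vb k i j)
        = ∑ m : ZMod L, Fc L (-k) m * (starRingEnd ℂ) (V (i, 0) (j, m)) := by
    intro k i j
    rw [hVb', map_sum]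
    refine Finset.sum_congr rfl fun m _ => ?_
    rw [_root_.map_mul, conj_Fc]
  -- entrywise Fourier inversion
  have hent : ∀ (i j : Fin N) (m : ZMod L),
      (L : ℂ) * V (i, 0) (j, m) = ∑ k : ZMod L, Fc L (-k) m * Vb k i j := by
    intro i j m
    rw [← dft_inversion L (fun m' => V (i, 0) (j, m')) m]
    refine (Finset.sum_congr rfl fun k _ => ?_).symm
    rw [← hVb']
  refine ⟨?_, ?_, ?_, ?_⟩
  · -- realness
    constructor
    · intro hre k i j
      have hrealV : ∀ p q, (starRingEnd ℂ) (V p q) = V p q := fun p q =>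
        Complex.conj_eq_iff_im.mpr (hre p q)
      rw [hVb' k i j, hconjVb (-k) i j]
      simp_rw [neg_neg, hrealV]
    · intro h p q
      have hS : ∀ (i j : Fin N) (m : ZMod L),
          V (i, 0) (j, m) - (starRingEnd ℂ) (V (i, 0) (j, m)) = 0 := by
        intro i j
        apply dft_eq_zero
        intro k
        simp_rw [mul_sub, Finset.sum_sub_distrib]
        rw [← hVb' k i j]
        have : ∑ m' : ZMod L, Fc L k m' * (starRingEnd ℂ) (V (i, 0) (j, m'))
            = (starRingEnd ℂ) (Vb (-k) i j) := by
          rw [hconjVb (-k) i j]; simp_rw [neg_neg]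
        rw [this, ← h k i j, sub_self]
      obtain ⟨i, k⟩ := p
      obtain ⟨j, l⟩ := q
      rw [hcirc]
      have := sub_eq_zero.mp (hS i j (l - k))
      rw [← Complex.conj_eq_iff_im]
      exact this.symm
  · -- PSD
    classical
    set Dm : ZMod L → Matrix (Fin N × ZMod L) (Fin N) ℂ :=
      fun k => Matrix.of fun p j => if p.1 = j then Fc L k p.2 else 0 with hDm
    have hLinv : (0 : ℂ) ≤ (L : ℂ)⁻¹ := by
      have : ((L : ℂ))⁻¹ = (((L : ℝ)⁻¹ : ℝ) : ℂ) := by push_cast; ring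
      rw [this]
      exact Complex.zero_le_real.mpr (by positivity)
    have hF : ∀ (k k' l : ZMod L), Fc L (-k) (l - k') = Fc L k k' * Fc L (-k) l := by
      intro k k' l
      rw [sub_eq_add_neg, Fc_add_right, Fc_neg_neg, mul_comm]
    have hDVD : ∀ k : ZMod L, (Dm k)ᴴ * V * Dm k = (L : ℂ) • Vb k := by
      intro k
      ext i j
      have hterm : ∀ k' : ZMod L,
          ∑ l : ZMod L, Fc L (-k) k' * (V (i, 0) (j, l - k') * Fc L k l) = Vb k i j := by
        intro k'
        rw [hVb' k i j]
        refine Fintype.sum_equiv (Equiv.subRight k') _ _ fun l => ?_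
        have h0 : Fc L k l = Fc L k (l - k') * Fc L k k' := by
          rw [← Fc_add_right, sub_add_cancel]
        have h1 : Fc L (-k) k' * Fc L k k' = 1 := by
          rw [mul_comm]; exact Fc_neg_mul L k k'
        show Fc L (-k) k' * (V (i, 0) (j, l - k') * Fc L k l)
            = Fc L k (l - k') * V (i, 0) (j, l - k')
        calc Fc L (-k) k' * (V (i, 0) (j, l - k') * Fc L k l)
            = (Fc L (-k) k' * Fc L k k') * (Fc L k (l - k') * V (i, 0) (j, l - k')) := by
              rw [h0]; ring
          _ = _ := by rw [h1, one_mul]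
      simp only [hDm, Matrix.mul_apply, Matrix.conjTranspose_apply, Matrix.of_apply,
        Matrix.smul_apply, smul_eq_mul, Fintype.sum_prod_type, apply_ite (star : ℂ → ℂ),
        star_zero, ite_mul, zero_mul, mul_ite, mul_zero, Finset.sum_ite_irrel,
        Finset.sum_const_zero, Finset.sum_ite_eq, Finset.sum_ite_eq', Finset.mem_univ, if_true]
      have step : ∀ l : ZMod L,
          (∑ k' : ZMod L, star (Fc L k k') * V (i, k') (j, l)) * Fc L k l
            = ∑ k' : ZMod L, Fc L (-k) k' * (V (i, 0) (j, l - k') * Fc L k l) := by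
        intro l
        rw [Finset.sum_mul]
        refine Finset.sum_congr rfl fun k' _ => ?_
        rw [Complex.star_def, conj_Fc, hcirc i j k' l, mul_assoc]
      simp_rw [step]
      rw [Finset.sum_comm]
      simp_rw [hterm]
      rw [Finset.sum_const, Finset.card_univ, ZMod.card, nsmul_eq_mul]
    have hVsum : (L : ℂ) • V = ∑ k : ZMod L, Dm k * Vb k * (Dm k)ᴴ := by
      ext p q
      obtain ⟨i, k'⟩ := p
      obtain ⟨j, l⟩ := q
      rw [Matrix.smul_apply, smul_eq_mul, hcirc i j k' l, hent i j (l - k'), Matrix.sum_apply]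
      refine Finset.sum_congr rfl fun k _ => ?_
      rw [hF]
      simp only [hDm, Matrix.mul_apply, Matrix.conjTranspose_apply, Matrix.of_apply,
        apply_ite (star : ℂ → ℂ), star_zero, ite_mul, zero_mul, mul_ite, mul_zero,
        Finset.sum_ite_irrel, Finset.sum_const_zero, Finset.sum_ite_eq, Finset.sum_ite_eq',
        Finset.mem_univ, if_true]
      rw [Complex.star_def, conj_Fc]
      ring
    have hVbEq : ∀ k : ZMod L, Vb k = (L : ℂ)⁻¹ • ((Dm k)ᴴ * V * Dm k) := by
      intro k; rw [hDVD k, smul_smul, inv_mul_cancel₀ hL0, one_smul]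
    have hVEq : V = (L : ℂ)⁻¹ • ∑ k : ZMod L, Dm k * Vb k * (Dm k)ᴴ := by
      rw [← hVsum, smul_smul, inv_mul_cancel₀ hL0, one_smul]
    have hsmulPSD : ∀ {n : Type} [Fintype n] (M : Matrix n n ℂ),
        M.PosSemidef → ((L : ℂ)⁻¹ • M).PosSemidef := by
      intro n _ M hM
      constructor
      · show ((L : ℂ)⁻¹ • M)ᴴ = (L : ℂ)⁻¹ • M
        rw [Matrix.conjTranspose_smul, hM.1.eq]
        congr 1
        simp
      · intro x
        have hx : (x.sum fun i xi => x.sum fun j xj => star xi * ((L : ℂ)⁻¹ • M) i j * xj)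
            = (L : ℂ)⁻¹ * (x.sum fun i xi => x.sum fun j xj => star xi * M i j * xj) := by
          simp only [Matrix.smul_apply, smul_eq_mul, Finsupp.sum, Finset.mul_sum]
          exact Finset.sum_congr rfl fun _ _ => Finset.sum_congr rfl fun _ _ => by ring
        rw [hx]
        exact mul_nonneg hLinv (hM.2 x)
    constructor
    · intro h k
      rw [hVbEq k]
      exact hsmulPSD _ (h.conjTranspose_mul_mul_same (Dm k))
    · intro h
      rw [hVEq]
      refine hsmulPSD _ ?_
      refine Finset.sum_induction _ Matrix.PosSemidef (fun a b ha hb => ha.add hb) ?_ ?_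
      · exact ⟨Matrix.isHermitian_zero, fun x => by simp⟩
      · intro k _
        exact (h k).mul_mul_conjTranspose_same (Dm k)
  · -- diagonal
    constructor
    · intro h k i
      have hdiag : ∀ m : ZMod L, V (i, 0) (i, m) = if m = 0 then 1 / (L : ℂ) else 0 := by
        intro m
        by_cases hm : m = 0
        · subst hm; simp only [if_pos rfl]; exact (h i 0 0).2
        · rw [if_neg hm]
          exact (h i 0 m).1 (Ne.symm hm)
      rw [hVb' k i i]
      simp_rw [hdiag, mul_ite, mul_zero, mul_one_div]
      rw [Finset.sum_ite_eq' Finset.univ (0 : ZMod L) (fun m => Fc L k m / L)]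
      simp [Fc_zero_right]
    · intro h i k l
      have hdiag : ∀ m : ZMod L,
          V (i, 0) (i, m) - (if m = 0 then 1 / (L : ℂ) else 0) = 0 := by
        apply dft_eq_zero
        intro k'
        simp_rw [mul_sub, Finset.sum_sub_distrib]
        rw [← hVb' k' i i, h k' i]
        simp_rw [mul_ite, mul_zero, mul_one_div]
        rw [Finset.sum_ite_eq' Finset.univ (0 : ZMod L) (fun m => Fc L k' m / L)]
        simp [Fc_zero_right]
      have hdiag' : ∀ m : ZMod L,
          V (i, 0) (i, m) = if m = 0 then 1 / (L : ℂ) else 0 :=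
        fun m => sub_eq_zero.mp (hdiag m)
      constructor
      · intro hkl
        rw [hcirc, hdiag', if_neg (sub_ne_zero.mpr (Ne.symm hkl))]
      · rw [hcirc, sub_self, hdiag', if_pos rfl]
  · -- row sums
    have hsum : ∀ i j : Fin N,
        ∑ k : ZMod L, ∑ l : ZMod L, V (i, k) (j, l) = (L : ℂ) * Vb 0 i j := by
      intro i j
      have h1 : ∀ k : ZMod L, ∑ l : ZMod L, V (i, k) (j, l) = Vb 0 i j := by
        intro k
        rw [hVb' 0 i j]
        simp_rw [Fc_zero, one_mul]
        refine Fintype.sum_equiv (Equiv.subRight k) _ _ fun l => ?_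
        rw [hcirc]
        rfl
      simp_rw [h1]
      rw [Finset.sum_const, Finset.card_univ, ZMod.card, nsmul_eq_mul]
    constructor
    · intro h i j
      have := h i j
      rw [hsum i j] at this
      field_simp at this ⊢
      linear_combination this
    · intro h i j
      rw [hsum i j, h i j]
      field_simp
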